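/- Let G and H be finite connected graphs, each with at least one edge, with H square-free, let f : G → H be a graph homomorphism, v ∈ V(G) a non-isolated vertex, w = f(v), and let K be the image of f_* : π₁²(G,v) → π₁²(H,w). If K is not commutative (equivalently, K is a non-abelian free group), then Π(f,v) is the trivial group. -/

import Mathlib

structure SGraph where
  V : Type
  E : V → V → Prop
  symm : ∀ {x y}, E x y → E y x

def IsGraphHom (G H : SGraph) (f : G.V → H.V) : Prop :=
  ∀ {x y}, G.E x y → H.E (f x) (f y)

structure Walk (G : SGraph) (a b : G.V) where
  len : ℕ
  toFun : ℕ → G.V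
  start_eq : toFun 0 = a
  end_eq : toFun len = b
  adj : ∀ i, i < len → G.E (toFun i) (toFun (i + 1))

structure MultiHom (G H : SGraph) where
  toFun : G.V → Set H.V
  nonempty : ∀ x, (toFun x).Nonempty
  edge : ∀ {x y}, G.E x y → ∀ a ∈ toFun x, ∀ b ∈ toFun y, H.E a b

def MultiHom.le {G H : SGraph} (η η' : MultiHom G H) : Prop :=
  ∀ x, η.toFun x ⊆ η'.toFun x

def SameComponent {G H : SGraph} (η η' : MultiHom G H) : Prop :=
  Relation.ReflTransGen (fun a b => MultiHom.le a b ∨ MultiHom.le b a) η η'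

def ofHom {G H : SGraph} (f : G.V → H.V) (hf : IsGraphHom G H f) : MultiHom G H where
  toFun x := {f x}
  nonempty x := ⟨f x, rfl⟩
  edge := by
    intro x y hxy a ha b hb
    rw [Set.mem_singleton_iff] at ha hb
    subst ha; subst hb
    exact hf hxy

def prodI (G : SGraph) (n : ℕ) : SGraph where
  V := G.V × Fin (n + 1)
  E := fun p q => G.E p.1 q.1 ∧ p.2.val ≤ q.2.val + 1 ∧ q.2.val ≤ p.2.val + 1
  symm := by
    rintro p q ⟨h1, h2, h3⟩
    exact ⟨G.symm h1, h3, h2⟩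

def MoveA {G : SGraph} {a b : G.V} (γ δ : Walk G a b) : Prop :=
  δ.len = γ.len + 2 ∧ ∃ k ≤ γ.len,
    (∀ i ≤ k, δ.toFun i = γ.toFun i) ∧
    (∀ i, k ≤ i → i ≤ γ.len → δ.toFun (i + 2) = γ.toFun i)

def MoveB {G : SGraph} {a b : G.V} (γ δ : Walk G a b) : Prop :=
  γ.len = δ.len ∧ ∃ j, ∀ i ≤ γ.len, i ≠ j → γ.toFun i = δ.toFun i

def Eqv1 {G : SGraph} {a b : G.V} : Walk G a b → Walk G a b → Prop :=
  Relation.EqvGen MoveA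

def Eqv2 {G : SGraph} {a b : G.V} : Walk G a b → Walk G a b → Prop :=
  Relation.EqvGen (fun γ δ => MoveA γ δ ∨ MoveB γ δ)

noncomputable def SGraph.dist (G : SGraph) (a b : G.V) : ℕ :=
  sInf {n | ∃ γ : Walk G a b, γ.len = n}

def SGraph.Connected (G : SGraph) : Prop := ∀ a b : G.V, Nonempty (Walk G a b)

def SGraph.Bipartite (G : SGraph) : Prop :=
  ∃ c : G.V → ZMod 2, ∀ {x y}, G.E x y → c x ≠ c y

def constWalk {G : SGraph} (a : G.V) : Walk G a a :=
  ⟨0, fun _ => a, rfl, rfl, fun i hi => absurd hi (by omega)⟩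

def Walk.concat {G : SGraph} {a b c : G.V} (γ : Walk G a b) (δ : Walk G b c) :
    Walk G a c where
  len := γ.len + δ.len
  toFun i := if i ≤ γ.len then γ.toFun i else δ.toFun (i - γ.len)
  start_eq := by simp [γ.start_eq]
  end_eq := by
    by_cases h : δ.len = 0
    · have hbc : b = c := by
        have h1 := δ.end_eq
        rw [h, δ.start_eq] at h1
        exact h1
      simp [h, γ.end_eq, hbc]
    · have h1 : ¬ (γ.len + δ.len ≤ γ.len) := by omega
      try dsimp only
      rw [if_neg h1]
      have h2 : γ.len + δ.len - γ.len = δ.len := by omega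
      rw [h2, δ.end_eq]
  adj := by
    intro i hi
    try dsimp only
    rcases lt_trichotomy i γ.len with h | h | h
    · rw [if_pos (by omega : i ≤ γ.len), if_pos (by omega : i + 1 ≤ γ.len)]
      exact γ.adj i h
    · have hδ : 0 < δ.len := by omega
      rw [if_pos (by omega : i ≤ γ.len), if_neg (by omega : ¬ i + 1 ≤ γ.len)]
      have h2 : i + 1 - γ.len = 1 := by omega
      rw [h2, h, γ.end_eq]
      have h3 := δ.adj 0 hδ
      rw [δ.start_eq] at h3
      exact h3
    · rw [if_neg (by omega : ¬ i ≤ γ.len), if_neg (by omega : ¬ i + 1 ≤ γ.len)]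
      have h2 : i + 1 - γ.len = (i - γ.len) + 1 := by omega
      rw [h2]
      exact δ.adj (i - γ.len) (by omega)

def Walk.reverse {G : SGraph} {a b : G.V} (γ : Walk G a b) : Walk G b a where
  len := γ.len
  toFun i := γ.toFun (γ.len - i)
  start_eq := by simp [γ.end_eq]
  end_eq := by simp [γ.start_eq]
  adj := by
    intro i hi
    have h1 : γ.len - i = (γ.len - (i + 1)) + 1 := by omega
    have h2 := γ.adj (γ.len - (i + 1)) (by omega)
    rw [← h1] at h2
    exact G.symm h2

def Walk.map {G H : SGraph} (f : G.V → H.V) (hf : IsGraphHom G H f) {a b : G.V}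
    (γ : Walk G a b) : Walk H (f a) (f b) where
  len := γ.len
  toFun i := f (γ.toFun i)
  start_eq := by (try dsimp only); rw [γ.start_eq]
  end_eq := by (try dsimp only); rw [γ.end_eq]
  adj := fun i hi => hf (γ.adj i hi)

def Walk.pow {G : SGraph} {a : G.V} (γ : Walk G a a) : ℕ → Walk G a a
  | 0 => constWalk a
  | n + 1 => (Walk.pow γ n).concat γ

def Walk.zpow {G : SGraph} {a : G.V} (γ : Walk G a a) : ℤ → Walk G a a
  | Int.ofNat n => γ.pow n
  | Int.negSucc n => γ.reverse.pow (n + 1)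
def finClip (n t : ℕ) : Fin (n + 1) := ⟨min t n, by omega⟩

def realizedWalk {G H : SGraph} {n : ℕ} (h : (prodI G n).V → H.V)
    (hh : IsGraphHom (prodI G n) H h) {v v' : G.V} (hvv' : G.E v v')
    {w : H.V} (h0 : h (v, finClip n 0) = w) (hN : h (v, finClip n n) = w) :
    Walk H w w where
  len := 2 * n
  toFun i := if i % 2 = 0 then h (v, finClip n (i / 2)) else h (v', finClip n (i / 2))
  start_eq := by
    try dsimp only
    rw [if_pos (by norm_num : (0:ℕ) % 2 = 0), Nat.zero_div]
    exact h0
  end_eq := by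
    try dsimp only
    rw [if_pos (by omega : (2 * n) % 2 = 0)]
    have h2 : 2 * n / 2 = n := by omega
    rw [h2]
    exact hN
  adj := by
    intro i hi
    try dsimp only
    rcases Nat.even_or_odd i with he | ho
    · obtain ⟨t, ht⟩ := he
      rw [if_pos (by omega : i % 2 = 0), if_neg (by omega : ¬ (i + 1) % 2 = 0)]
      have h4 : (i + 1) / 2 = i / 2 := by omega
      rw [h4]
      refine hh ⟨hvv', ?_, ?_⟩ <;> ((try dsimp only); omega)
    · obtain ⟨t, ht⟩ := ho
      rw [if_neg (by omega : ¬ i % 2 = 0), if_pos (by omega : (i + 1) % 2 = 0)]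
      refine hh ⟨G.symm hvv', ?_, ?_⟩ <;> (dsimp only [finClip]; omega)

def Realizable {G H : SGraph} (f : G.V → H.V) (v : G.V) (ω : Walk H (f v) (f v)) : Prop :=
  ∃ (n : ℕ) (h : (prodI G n).V → H.V) (hh : IsGraphHom (prodI G n) H h)
    (hs : ∀ x, h (x, finClip n 0) = f x) (he : ∀ x, h (x, finClip n n) = f x)
    (v' : G.V) (_ : G.E v v'),
    Eqv2 ω (realizedWalk h hh ‹G.E v v'› (hs v) (he v))
def SquareFree (G : SGraph) : Prop :=
  (∀ x, ¬ G.E x x) ∧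
  ¬ ∃ a b c d : G.V, a ≠ b ∧ a ≠ c ∧ a ≠ d ∧ b ≠ c ∧ b ≠ d ∧ c ≠ d ∧
    G.E a b ∧ G.E b c ∧ G.E c d ∧ G.E d a

def nbhd (G : SGraph) (v : G.V) : Set G.V := {y | G.E v y}

def nbhd2 (G : SGraph) (v : G.V) : Set G.V := {z | ∃ y, G.E v y ∧ G.E y z}

def IsGraphCovering (G H : SGraph) (p : G.V → H.V) : Prop :=
  IsGraphHom G H p ∧ ∀ v : G.V, Set.BijOn p (nbhd G v) (nbhd H (p v))

def Is2CoveringMap (G H : SGraph) (p : G.V → H.V) : Prop :=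
  IsGraphHom G H p ∧ ∀ v : G.V,
    Set.BijOn p (nbhd G v) (nbhd H (p v)) ∧ Set.BijOn p (nbhd2 G v) (nbhd2 H (p v))

def pushforward {G H1 H2 : SGraph} (p : H1.V → H2.V) (hp : IsGraphHom H1 H2 p)
    (η : MultiHom G H1) : MultiHom G H2 where
  toFun x := p '' η.toFun x
  nonempty x := (η.nonempty x).image p
  edge := by
    rintro x y hxy a ⟨a', ha', rfl⟩ b ⟨b', hb', rfl⟩
    exact hp (η.edge hxy a' ha' b' hb')

def IsCycleWalk {G : SGraph} {a : G.V} (γ : Walk G a a) : Prop :=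
  3 ≤ γ.len ∧ ∀ i j, i < γ.len → j < γ.len → γ.toFun i = γ.toFun j → i = j

def IsTree (T : SGraph) : Prop :=
  (∀ x, ¬ T.E x x) ∧ (∀ a b : T.V, Nonempty (Walk T a b)) ∧
    ∀ (a : T.V) (γ : Walk T a a), ¬ IsCycleWalk γ

def IsPath {G : SGraph} {a b : G.V} (γ : Walk G a b) : Prop :=
  ∀ i j, i ≤ γ.len → j ≤ γ.len → γ.toFun i = γ.toFun j → i = j

def OnWalk {G : SGraph} {a b : G.V} (γ : Walk G a b) (y : G.V) : Prop :=
  ∃ i ≤ γ.len, γ.toFun i = y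

def CrossHomotopic (G H : SGraph) (f g : G.V → H.V) : Prop :=
  ∃ (n : ℕ) (h : (prodI G n).V → H.V), IsGraphHom (prodI G n) H h ∧
    (∀ x, h (x, finClip n 0) = f x) ∧ (∀ x, h (x, finClip n n) = g x)

def quotGraph (G : SGraph) (Γ : Type) [Group Γ] [MulAction Γ G.V] : SGraph where
  V := Quotient (MulAction.orbitRel Γ G.V)
  E := fun α β => ∃ x y : G.V, Quotient.mk (MulAction.orbitRel Γ G.V) x = α ∧
        Quotient.mk (MulAction.orbitRel Γ G.V) y = β ∧ G.E x y
  symm := by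
    rintro α β ⟨x, y, hx, hy, hxy⟩
    exact ⟨y, x, hy, hx, G.symm hxy⟩



namespace CTAux
open FreeGroup

variable {α : Type} [DecidableEq α]

def Cancels (x y : α × Bool) : Prop := x.1 = y.1 ∧ x.2 = !y.2

lemma reduce_cons_of_ne {L : List (α × Bool)} {x : α × Bool}
    (hL : reduce L = L) (h : ∀ y ∈ L.head?, ¬ Cancels x y) :
    reduce (x :: L) = x :: L := by
  rw [reduce.cons, hL]
  cases L with
  | nil => rfl
  | cons hd tl =>
    have : ¬ (x.1 = hd.1 ∧ x.2 = !hd.2) := h hd rfl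
    simp only [this, if_false]

lemma reduce_cons_cancel {L tl : List (α × Bool)} {x hd : α × Bool}
    (hL : reduce L = L) (hhd : L = hd :: tl)
    (h : Cancels x hd) : reduce (x :: L) = tl := by
  rw [reduce.cons, hL, hhd]
  exact if_pos ⟨h.1, h.2⟩

lemma reduce_tail {x : α × Bool} {L : List (α × Bool)} (h : reduce (x :: L) = x :: L) :
    reduce L = L := by
  have h1 : Red (reduce (x :: L)) (x :: reduce L) := by
    rw [h]; exact Red.cons_cons reduce.red
  have h2 := reduce.min h1
  rw [h] at h2
  exact (List.cons.injEq _ _ _ _ ▸ h2).2.symm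

lemma invRev_concat (L : List (α × Bool)) (x : α × Bool) :
    invRev (L ++ [x]) = (x.1, !x.2) :: invRev L := by
  simp [invRev]

lemma reduce_concat_of_ne {L : List (α × Bool)} {x : α × Bool}
    (hL : reduce L = L) (h : ∀ y ∈ L.getLast?, ¬ Cancels y x) :
    reduce (L ++ [x]) = L ++ [x] := by
  have h1 : reduce (invRev (L ++ [x])) = invRev (L ++ [x]) := by
    rw [invRev_concat]
    apply reduce_cons_of_ne
    · rw [reduce_invRev, hL]
    · intro y hy hc
      rcases List.eq_nil_or_concat L with rfl | ⟨L', z, rfl⟩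
      · simp [invRev] at hy
      · rw [List.concat_eq_append] at hL hy h
        rw [invRev_concat] at hy
        simp only [List.head?_cons, Option.mem_def, Option.some.injEq] at hy
        subst hy
        apply h z (by simp)
        refine ⟨hc.1.symm, ?_⟩
        have h2 := hc.2
        simp only [Bool.not_not] at h2
        exact h2.symm
  have := congrArg invRev h1
  rwa [reduce_invRev, invRev_invRev, invRev_invRev] at this

lemma peel {w : FreeGroup α} {a : α} {b : Bool} {tl : List (α × Bool)}
    (hW : w.toWord = (a, b) :: tl) :
    w = (if b then of a else (of a)⁻¹) * mk tl ∧ (mk tl : FreeGroup α).toWord = tl := by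
  have hred : reduce ((a, b) :: tl) = (a, b) :: tl := by
    rw [← hW]; exact reduce_toWord w
  constructor
  · have hw : w = mk ((a, b) :: tl) := by rw [← hW, mk_toWord]
    rw [hw]
    cases b with
    | false =>
      have h2 : (of a : FreeGroup α)⁻¹ = mk [(a, false)] := by
        rw [of, inv_mk]; rfl
      rw [if_neg (by simp), h2, mul_mk]; rfl
    | true =>
      rw [if_pos rfl, of, mul_mk]; rfl
  · rw [toWord_mk, reduce_tail hred]

lemma commute_of_aux (a : α) : ∀ (n : ℕ) (w : FreeGroup α), w.norm = n →
    Commute w (of a) → ∃ k : ℤ, w = of a ^ k := by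
  intro n
  induction n using Nat.strong_induction_on with
  | _ n ih =>
    intro w hn hcomm
    match hW : w.toWord with
    | [] =>
      exact ⟨0, by rw [zpow_zero]; exact toWord_eq_nil_iff.mp hW⟩
    | (b, bb) :: tl =>
      have hlen : w.norm = tl.length + 1 := by
        unfold FreeGroup.norm; rw [hW]; simp
      by_cases hba : b = a
      · rw [hba] at hW
        obtain ⟨hw, htl⟩ := peel hW
        have hnorm : (mk tl : FreeGroup α).norm < n := by
          unfold FreeGroup.norm; rw [htl]; omega
        have hc' : Commute (mk tl) (of a) := by
          have h3 : (mk tl : FreeGroup α) = (if bb then of a else (of a)⁻¹)⁻¹ * w := by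
            rw [hw]; group
          rw [h3]
          refine Commute.mul_left ?_ hcomm
          cases bb
          · simpa using (Commute.refl (of a)).inv_left.inv_left
          · simpa using (Commute.refl (of a)).inv_left
        obtain ⟨k, hk⟩ := ih _ hnorm (mk tl) rfl hc'
        refine ⟨(if bb then 1 else -1) + k, ?_⟩
        rw [hw, hk, zpow_add]
        cases bb <;> simp
      · have hWne : w.toWord ≠ [] := by rw [hW]; simp
        by_cases hlast : (w.toWord.getLast hWne).1 = a
        · set z := w.toWord.getLast hWne with hz
          have hinv : w⁻¹.toWord = (a, !z.2) :: invRev (w.toWord.dropLast) := by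
            rw [toWord_inv]
            conv_lhs => rw [← List.dropLast_append_getLast hWne]
            rw [invRev_concat, hlast]
          obtain ⟨hw, htl⟩ := peel hinv
          have hnorm : (mk (invRev w.toWord.dropLast) : FreeGroup α).norm < n := by
            unfold FreeGroup.norm
            rw [htl, invRev_length, List.length_dropLast]
            have : w.toWord.length = w.norm := rfl
            omega
          have hc' : Commute (mk (invRev w.toWord.dropLast)) (of a) := by
            have h3 : (mk (invRev w.toWord.dropLast) : FreeGroup α)
                = (if !z.2 then of a else (of a)⁻¹)⁻¹ * w⁻¹ := by
              rw [hw]; group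
            rw [h3]
            refine Commute.mul_left ?_ hcomm.inv_left
            cases (!z.2)
            · simpa using (Commute.refl (of a)).inv_left.inv_left
            · simpa using (Commute.refl (of a)).inv_left
          obtain ⟨k, hk⟩ := ih _ hnorm _ rfl hc'
          refine ⟨-((if !z.2 then (1:ℤ) else -1) + k), ?_⟩
          have h4 : w⁻¹ = of a ^ ((if !z.2 then (1:ℤ) else -1) + k) := by
            rw [hw, hk, zpow_add]
            cases (!z.2) <;> simp
          rw [← inv_inv w, h4, ← zpow_neg]
        · exfalso
          have hred : reduce w.toWord = w.toWord := reduce_toWord w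
          have h1 : (of a * w).toWord = (a, true) :: w.toWord := by
            have : of a * w = mk ((a, true) :: w.toWord) := by
              conv_lhs => rw [← mk_toWord (x := w), of, mul_mk]
              rfl
            rw [this, toWord_mk]
            apply reduce_cons_of_ne hred
            intro y hy hc
            rw [hW] at hy
            simp only [List.head?_cons, Option.mem_def, Option.some.injEq] at hy
            subst hy
            exact hba hc.1.symm
          have h2 : (w * of a).toWord = w.toWord ++ [(a, true)] := by
            have : w * of a = mk (w.toWord ++ [(a, true)]) := by
              conv_lhs => rw [← mk_toWord (x := w), of, mul_mk]
            rw [this, toWord_mk]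
            apply reduce_concat_of_ne hred
            intro y hy hc
            rw [List.getLast?_eq_getLast hWne] at hy
            simp only [Option.mem_def, Option.some.injEq] at hy
            subst hy
            exact hlast hc.1
          have h3 : (a, true) :: w.toWord = w.toWord ++ [(a, true)] := by
            rw [← h1, ← h2, hcomm.eq]
          rw [hW] at h3
          have h4 := congrArg List.head? h3
          simp only [List.head?_cons, List.cons_append, Option.some.injEq] at h4
          exact hba ((Prod.mk.injEq _ _ _ _ ▸ h4).1.symm)
  
lemma zpow_of_head {a : α} {k : ℤ} (hk : k ≠ 0) :
    ∃ bb, ((of a : FreeGroup α) ^ k).toWord.head? = some (a, bb) := by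
  match k with
  | Int.ofNat 0 => exact absurd rfl hk
  | Int.ofNat (n+1) =>
    refine ⟨true, ?_⟩
    have hz : (of a : FreeGroup α) ^ (Int.ofNat (n+1)) = of a ^ (n+1) := by
      rw [Int.ofNat_eq_natCast, zpow_natCast]
    rw [hz, toWord_of_pow]
    simp [List.replicate_succ]
  | Int.negSucc n =>
    refine ⟨false, ?_⟩
    rw [zpow_negSucc, toWord_inv, toWord_of_pow]
    have : invRev (List.replicate (n+1) ((a, true) : α × Bool))
        = List.replicate (n+1) (a, false) := by
      simp [invRev, List.map_replicate, List.reverse_replicate]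
    rw [this]
    simp [List.replicate_succ]

lemma comm_of_subsingleton {S : Type} [Subsingleton S] (x y : FreeGroup S) :
    Commute x y := by
  have gen : ∀ (z : S) (u : FreeGroup S), Commute (of z) u := by
    intro z u
    induction u using FreeGroup.induction_on with
    | C1 => exact Commute.one_right _
    | of t => rw [Subsingleton.elim z t]
    | inv_of t ih => exact ih.inv_right
    | mul u v ih1 ih2 => exact ih1.mul_right ih2
  induction x using FreeGroup.induction_on with
  | C1 => exact Commute.one_left _
  | of t => exact gen t y
  | inv_of t ih => exact (gen t y).inv_left
  | mul u v ih1 ih2 => exact ih1.mul_left ih2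

theorem commute_transitive {β : Type} {g a b : FreeGroup β} (hg : g ≠ 1)
    (ha : Commute a g) (hb : Commute b g) : Commute a b := by
  classical
  set Z := Subgroup.centralizer ({g} : Set (FreeGroup β)) with hZ
  have hmem : ∀ x : FreeGroup β, Commute x g → x ∈ Z := by
    intro x hx
    rw [hZ, Subgroup.mem_centralizer_iff]
    rintro h hh
    rw [Set.mem_singleton_iff] at hh
    subst hh
    exact hx.symm.eq
  have hgZ : g ∈ Z := hmem g (Commute.refl g)
  let gz : Z := ⟨g, hgZ⟩
  have hcentral : ∀ z : Z, z * gz = gz * z := by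
    rintro ⟨z, hz⟩
    have h5 := Subgroup.mem_centralizer_iff.mp hz g (Set.mem_singleton g)
    exact Subtype.ext (by simpa using h5.symm)
  let e : Z ≃* FreeGroup (IsFreeGroup.Generators Z) := IsFreeGroup.toFreeGroup Z
  set c := e gz with hc
  have hc1 : c ≠ 1 := by
    intro h
    apply hg
    have h6 : gz = 1 := e.injective (by rw [← hc, h, _root_.map_one])
    simpa [gz] using congrArg Subtype.val h6
  have hccentral : ∀ x : FreeGroup (IsFreeGroup.Generators Z), Commute x c := by
    intro x
    obtain ⟨z, rfl⟩ := e.surjective x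
    have h7 := hcentral z
    rw [Commute, SemiconjBy, hc, ← _root_.map_mul, ← _root_.map_mul, h7]
  haveI hss : Subsingleton (IsFreeGroup.Generators Z) := by
    constructor
    intro s t
    obtain ⟨k, hk⟩ := commute_of_aux s c.norm c rfl (hccentral (of s)).symm
    obtain ⟨j, hj⟩ := commute_of_aux t c.norm c rfl (hccentral (of t)).symm
    have hk0 : k ≠ 0 := by rintro rfl; rw [zpow_zero] at hk; exact hc1 hk
    have hj0 : j ≠ 0 := by rintro rfl; rw [zpow_zero] at hj; exact hc1 hj
    obtain ⟨b1, hb1⟩ := zpow_of_head (a := s) hk0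
    obtain ⟨b2, hb2⟩ := zpow_of_head (a := t) hj0
    rw [← hk] at hb1
    rw [← hj] at hb2
    rw [hb1] at hb2
    exact congrArg Prod.fst (Option.some.inj hb2)
  have haZ : a ∈ Z := hmem a ha
  have hbZ : b ∈ Z := hmem b hb
  have h9 := comm_of_subsingleton (e ⟨a, haZ⟩) (e ⟨b, hbZ⟩)
  have h10 : (⟨a, haZ⟩ * ⟨b, hbZ⟩ : Z) = ⟨b, hbZ⟩ * ⟨a, haZ⟩ :=
    e.injective (by rw [_root_.map_mul, _root_.map_mul]; exact h9)
  exact congrArg Subtype.val h10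

end CTAux


namespace PhiAux
open FreeGroup

noncomputable section
variable {H : SGraph}

def sgen (H : SGraph) (x y : H.V) : FreeGroup (H.V × H.V) :=
  FreeGroup.of (x, y) * (FreeGroup.of (y, x))⁻¹

lemma sgen_mul_sgen (x y : H.V) : sgen H x y * sgen H y x = 1 := by
  unfold sgen; group

def wprod (H : SGraph) (g : ℕ → H.V) (n : ℕ) : FreeGroup (H.V × H.V) :=
  ((List.range n).map (fun i => sgen H (g i) (g (i + 1)))).prod

lemma wprod_zero (g : ℕ → H.V) : wprod H g 0 = 1 := rfl

lemma wprod_succ (g : ℕ → H.V) (n : ℕ) :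
    wprod H g (n + 1) = wprod H g n * sgen H (g n) (g (n + 1)) := by
  unfold wprod
  rw [List.range_succ, List.map_append, List.prod_append]
  simp

lemma wprod_congr {g g' : ℕ → H.V} {n : ℕ} (h : ∀ i ≤ n, g i = g' i) :
    wprod H g n = wprod H g' n := by
  induction n with
  | zero => rfl
  | succ n ih =>
    rw [wprod_succ, wprod_succ, ih (fun i hi => h i (by omega)),
      h n (by omega), h (n + 1) (by omega)]

lemma wprod_add (g : ℕ → H.V) (m k : ℕ) :
    wprod H g (m + k) = wprod H g m * wprod H (fun i => g (m + i)) k := by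
  induction k with
  | zero => simp [wprod_zero]
  | succ k ih =>
    have h1 : m + (k + 1) = (m + k) + 1 := by omega
    rw [h1, wprod_succ, ih, wprod_succ, mul_assoc]
    have h2 : m + k + 1 = m + (k + 1) := by omega
    rw [h2]

lemma wprod_shift_one (g : ℕ → H.V) (n : ℕ) :
    wprod H g (n + 1) = sgen H (g 0) (g 1) * wprod H (fun i => g (i + 1)) n := by
  have h1 : n + 1 = 1 + n := by omega
  rw [h1, wprod_add]
  have h2 : wprod H g 1 = sgen H (g 0) (g 1) := by
    have h3 := wprod_succ g 0
    rw [wprod_zero, one_mul] at h3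
    exact h3
  rw [h2]
  congr 1
  apply wprod_congr
  intro i _
  show g (1 + i) = g (i + 1)
  congr 1
  omega

def phi {a b : H.V} (γ : Walk H a b) : FreeGroup (H.V × H.V) :=
  wprod H γ.toFun γ.len

lemma phi_concat {a b c : H.V} (γ : Walk H a b) (δ : Walk H b c) :
    phi (γ.concat δ) = phi γ * phi δ := by
  unfold phi
  show wprod H (γ.concat δ).toFun (γ.len + δ.len) = _
  rw [wprod_add]
  congr 1
  · apply wprod_congr
    intro i hi
    show (if i ≤ γ.len then γ.toFun i else δ.toFun (i - γ.len)) = γ.toFun i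
    rw [if_pos hi]
  · apply wprod_congr
    intro i _
    show (if γ.len + i ≤ γ.len then γ.toFun (γ.len + i) else δ.toFun (γ.len + i - γ.len)) = δ.toFun i
    rcases Nat.eq_zero_or_pos i with rfl | hpos
    · rw [if_pos (by omega)]
      simp only [Nat.add_zero]
      rw [γ.end_eq, δ.start_eq]
    · rw [if_neg (by omega)]
      congr 1
      omega

lemma phi_const (a : H.V) : phi (constWalk a) = 1 := rfl

lemma wprod_split2 {g : ℕ → H.V} {n j : ℕ} (hj0 : 0 < j) (hjn : j < n) :
    wprod H g n = wprod H g (j - 1) *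
      (sgen H (g (j - 1)) (g j) * sgen H (g j) (g (j + 1))) *
      wprod H (fun i => g (j + 1 + i)) (n - (j + 1)) := by
  have h1 : n = (j + 1) + (n - (j + 1)) := by omega
  conv_lhs => rw [h1]
  rw [wprod_add]
  congr 1
  have h2 : j + 1 = (j - 1) + 1 + 1 := by omega
  rw [h2, wprod_succ, wprod_succ]
  have h3 : j - 1 + 1 = j := by omega
  rw [h3, mul_assoc]

lemma wprod_swap (hsf : SquareFree H) {g g' : ℕ → H.V} {n j : ℕ}
    (hadj : ∀ i < n, H.E (g i) (g (i + 1))) (hadj' : ∀ i < n, H.E (g' i) (g' (i + 1)))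
    (hj0 : 0 < j) (hjn : j < n) (heq : ∀ i ≤ n, i ≠ j → g i = g' i) :
    wprod H g n = wprod H g' n := by
  by_cases hgg : g j = g' j
  · apply wprod_congr
    intro i hi
    by_cases hij : i = j
    · rw [hij]; exact hgg
    · exact heq i hi hij
  · have hx : g (j - 1) = g' (j - 1) := heq _ (by omega) (by omega)
    have hz : g (j + 1) = g' (j + 1) := heq _ (by omega) (by omega)
    have e1 : H.E (g (j - 1)) (g j) := by
      have := hadj (j - 1) (by omega)
      rwa [show j - 1 + 1 = j from by omega] at this
    have e2 : H.E (g j) (g (j + 1)) := hadj j hjn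
    have e1' : H.E (g (j - 1)) (g' j) := by
      have := hadj' (j - 1) (by omega)
      rwa [show j - 1 + 1 = j from by omega, ← hx] at this
    have e2' : H.E (g' j) (g (j + 1)) := by
      have := hadj' j hjn
      rwa [← hz] at this
    have hxz : g (j + 1) = g (j - 1) := by
      by_contra hne
      apply hsf.2
      refine ⟨g (j - 1), g j, g (j + 1), g' j, ?_, ?_, ?_, ?_, ?_, ?_, e1, e2, H.symm e2', H.symm e1'⟩
      · intro hh; exact hsf.1 (g j) (hh ▸ e1)
      · intro hh; exact hne hh.symm
      · intro hh; exact hsf.1 (g' j) (hh ▸ e1')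
      · intro hh; exact hsf.1 (g j) (hh ▸ e2)
      · exact hgg
      · intro hh; exact hsf.1 (g' j) ((H.symm (hh ▸ e2')))
    rw [wprod_split2 hj0 hjn, wprod_split2 (g := g') hj0 hjn]
    congr 1
    · congr 1
      · exact wprod_congr (fun i hi => heq i (by omega) (by omega))
      · rw [← hx]
        have hxz' : g' (j + 1) = g' (j - 1) := by rw [← hz, ← hx, hxz]
        conv_lhs => rw [hxz]
        conv_rhs => rw [hxz']
        rw [← hx]
        rw [sgen_mul_sgen, sgen_mul_sgen]
    · exact wprod_congr (fun i _ => heq (j + 1 + i) (by omega) (by omega))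

lemma wprod_spike (g : ℕ → H.V) (k : ℕ) (hsp : g (k + 2) = g k) :
    wprod H g (k + 2) = wprod H g k := by
  rw [show k + 2 = (k + 1) + 1 from rfl, wprod_succ, wprod_succ, mul_assoc, hsp,
    sgen_mul_sgen, mul_one]

lemma phi_moveA {a b : H.V} {γ δ : Walk H a b} (h : MoveA γ δ) : phi δ = phi γ := by
  obtain ⟨hlen, k, hk, h1, h2⟩ := h
  have hd0 : δ.toFun k = γ.toFun k := h1 k le_rfl
  have hd2 : δ.toFun (k + 2) = δ.toFun k := by rw [h2 k le_rfl hk, ← hd0]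
  unfold phi
  rw [hlen]
  have hsplit : γ.len + 2 = (k + 2) + (γ.len - k) := by omega
  rw [hsplit, wprod_add, wprod_spike _ _ hd2]
  have hsplit2 : γ.len = k + (γ.len - k) := by omega
  conv_rhs => rw [hsplit2, wprod_add]
  congr 1
  · exact wprod_congr (fun i hi => h1 i hi)
  · apply wprod_congr
    intro i hi
    have := h2 (k + i) (by omega) (by omega)
    rw [show k + i + 2 = k + 2 + i from by omega] at this
    exact this

lemma phi_moveB (hsf : SquareFree H) {a b : H.V} {γ δ : Walk H a b} (h : MoveB γ δ) :
    phi γ = phi δ := by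
  obtain ⟨hlen, j, hj⟩ := h
  unfold phi
  rw [← hlen]
  by_cases hint : 0 < j ∧ j < γ.len
  · apply wprod_swap hsf
    · exact fun i hi => γ.adj i hi
    · intro i hi
      exact δ.adj i (hlen ▸ hi)
    · exact hint.1
    · exact hint.2
    · exact hj
  · apply wprod_congr
    intro i hi
    by_cases hij : i = j
    · subst hij
      rcases Nat.eq_zero_or_pos i with rfl | hpos
      · rw [γ.start_eq, δ.start_eq]
      · have hie : i = γ.len := by omega
        rw [hie, γ.end_eq, show γ.len = δ.len from hlen, δ.end_eq]
    · exact hj i hi hij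

lemma phi_eqv2 (hsf : SquareFree H) {a b : H.V} {γ δ : Walk H a b} (h : Eqv2 γ δ) :
    phi γ = phi δ := by
  induction h with
  | rel x y hxy =>
    rcases hxy with h | h
    · exact (phi_moveA h).symm
    · exact phi_moveB hsf h
  | refl x => rfl
  | symm x y _ ih => exact ih.symm
  | trans x y z _ _ ih1 ih2 => exact ih1.trans ih2

def deleteSpike {a b : H.V} (γ : Walk H a b) (i : ℕ) (hi : i + 2 ≤ γ.len)
    (hsp : γ.toFun (i + 2) = γ.toFun i) : Walk H a b where
  len := γ.len - 2
  toFun j := if j ≤ i then γ.toFun j else γ.toFun (j + 2)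
  start_eq := by simp [γ.start_eq]
  end_eq := by
    by_cases h : γ.len - 2 ≤ i
    · have hie : i = γ.len - 2 := by omega
      rw [if_pos h, ← hie, ← hsp, show i + 2 = γ.len from by omega, γ.end_eq]
    · rw [if_neg h, show γ.len - 2 + 2 = γ.len from by omega, γ.end_eq]
  adj := by
    intro j hj
    rcases lt_trichotomy j i with h | h | h
    · rw [if_pos (by omega), if_pos (by omega)]
      exact γ.adj j (by omega)
    · subst h
      rw [if_pos le_rfl, if_neg (by omega), ← hsp,
        show j + 1 + 2 = (j + 2) + 1 from by omega]
      exact γ.adj (j + 2) (by omega)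
    · rw [if_neg (by omega), if_neg (by omega),
        show j + 1 + 2 = (j + 2) + 1 from by omega]
      exact γ.adj (j + 2) (by omega)

lemma eqv2_deleteSpike {a b : H.V} (γ : Walk H a b) (i : ℕ) (hi : i + 2 ≤ γ.len)
    (hsp : γ.toFun (i + 2) = γ.toFun i) : Eqv2 γ (deleteSpike γ i hi hsp) := by
  apply Relation.EqvGen.symm
  apply Relation.EqvGen.rel
  left
  refine ⟨by show γ.len = γ.len - 2 + 2; omega, i, by show i ≤ γ.len - 2; omega, ?_, ?_⟩
  · intro j hj
    show γ.toFun j = (if j ≤ i then γ.toFun j else γ.toFun (j + 2))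
    rw [if_pos hj]
  · intro j hj1 hj2
    show γ.toFun (j + 2) = (if j ≤ i then γ.toFun j else γ.toFun (j + 2))
    by_cases h : j ≤ i
    · have : j = i := by omega
      rw [if_pos h, this, hsp]
    · rw [if_neg h]

def ReducedW {a b : H.V} (γ : Walk H a b) : Prop :=
  ∀ i, i + 2 ≤ γ.len → γ.toFun (i + 2) ≠ γ.toFun i

lemma exists_reduced {a b : H.V} (γ : Walk H a b) :
    ∃ δ : Walk H a b, ReducedW δ ∧ Eqv2 γ δ := by
  generalize hn : γ.len = n
  induction n using Nat.strong_induction_on generalizing γ with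
  | _ n ih =>
    by_cases hred : ReducedW γ
    · exact ⟨γ, hred, Relation.EqvGen.refl γ⟩
    · unfold ReducedW at hred
      push_neg at hred
      obtain ⟨i, hi, hsp⟩ := hred
      obtain ⟨δ, hδ1, hδ2⟩ := ih (γ.len - 2) (by omega) (deleteSpike γ i hi hsp) rfl
      exact ⟨δ, hδ1, Relation.EqvGen.trans _ _ _ (eqv2_deleteSpike γ i hi hsp) hδ2⟩

def Lw (g : ℕ → H.V) : ℕ → List ((H.V × H.V) × Bool)
  | 0 => []
  | n + 1 => ((g 0, g 1), true) :: ((g 1, g 0), false) :: Lw (fun i => g (i + 1)) n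

lemma mk_Lw (g : ℕ → H.V) (n : ℕ) : FreeGroup.mk (Lw g n) = wprod H g n := by
  induction n generalizing g with
  | zero => exact FreeGroup.one_eq_mk.symm
  | succ n ih =>
    have hy : (FreeGroup.mk [((g 1, g 0), false)] : FreeGroup (H.V × H.V))
        = (FreeGroup.of (g 1, g 0))⁻¹ := by
      rw [FreeGroup.of, FreeGroup.inv_mk]
      congr 1
    have hsplit : (FreeGroup.mk (((g 0, g 1), true) :: ((g 1, g 0), false)
          :: Lw (fun i => g (i + 1)) n) : FreeGroup (H.V × H.V))
        = FreeGroup.mk [((g 0, g 1), true)] * (FreeGroup.mk [((g 1, g 0), false)]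
          * FreeGroup.mk (Lw (fun i => g (i + 1)) n)) := rfl
    show FreeGroup.mk (((g 0, g 1), true) :: ((g 1, g 0), false)
      :: Lw (fun i => g (i + 1)) n) = _
    rw [hsplit, hy, ih, wprod_shift_one, ← mul_assoc]
    rfl

lemma Lw_length (g : ℕ → H.V) (n : ℕ) : (Lw g n).length = 2 * n := by
  induction n generalizing g with
  | zero => rfl
  | succ n ih =>
    show (((g 0, g 1), true) :: ((g 1, g 0), false) :: Lw (fun i => g (i + 1)) n).length = _
    rw [List.length_cons, List.length_cons, ih]
    omega

lemma Lw_head {g : ℕ → H.V} {n : ℕ} (hn : 0 < n) :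
    (Lw g n).head? = some ((g 0, g 1), true) := by
  match n, hn with
  | n + 1, _ => rfl

lemma Lw_reduced [DecidableEq (H.V × H.V)] {g : ℕ → H.V} {n : ℕ}
    (hloop : ∀ i < n, g i ≠ g (i + 1)) (hred : ∀ i, i + 2 ≤ n → g (i + 2) ≠ g i) :
    FreeGroup.reduce (Lw g n) = Lw g n := by
  induction n generalizing g with
  | zero => rfl
  | succ n ih =>
    have hrec : FreeGroup.reduce (Lw (fun i => g (i + 1)) n) = Lw (fun i => g (i + 1)) n :=
      ih (fun i hi => hloop (i + 1) (by omega)) (fun i hi => hred (i + 1) (by omega))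
    show FreeGroup.reduce (((g 0, g 1), true) :: ((g 1, g 0), false) :: Lw (fun i => g (i + 1)) n)
      = _
    have h2 : FreeGroup.reduce (((g 1, g 0), false) :: Lw (fun i => g (i + 1)) n)
        = ((g 1, g 0), false) :: Lw (fun i => g (i + 1)) n := by
      apply CTAux.reduce_cons_of_ne hrec
      intro y hy hc
      rcases Nat.eq_zero_or_pos n with rfl | hn
      · simp [Lw] at hy
      · rw [Lw_head hn] at hy
        simp only [Option.mem_def, Option.some.injEq] at hy
        subst hy
        rcases hc with ⟨hc1, _⟩
        have : g 0 = g 2 := congrArg Prod.snd hc1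
        exact hred 0 (by omega) this.symm
    have h3 := CTAux.reduce_cons_of_ne (x := ((g 0, g 1), true)) h2 ?_
    · exact h3
    · intro y hy hc
      simp only [List.head?_cons, Option.mem_def, Option.some.injEq] at hy
      subst hy
      rcases hc with ⟨hc1, _⟩
      exact hloop 0 (by omega) (congrArg Prod.fst hc1)

lemma Lw_inj {g g' : ℕ → H.V} {n : ℕ} (h : Lw g n = Lw g' n) :
    ∀ i < n, g i = g' i ∧ g (i + 1) = g' (i + 1) := by
  induction n generalizing g g' with
  | zero => intro i hi; omega
  | succ n ih =>
    have h0 : ((g 0, g 1), true) = ((g' 0, g' 1), true) := by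
      have := congrArg List.head? h
      rw [Lw_head (by omega), Lw_head (by omega)] at this
      exact Option.some.inj this
    have hg0 : g 0 = g' 0 := congrArg (fun p => p.1.1) h0
    have hg1 : g 1 = g' 1 := congrArg (fun p => p.1.2) h0
    have htail : Lw (fun i => g (i + 1)) n = Lw (fun i => g' (i + 1)) n := by
      have h1 := congrArg List.tail h
      have h2 := congrArg List.tail h1
      exact h2
    intro i hi
    rcases Nat.eq_zero_or_pos i with rfl | hpos
    · exact ⟨hg0, hg1⟩
    · have h4 := ih htail (i - 1) (by omega)
      rw [show i - 1 + 1 = i from by omega] at h4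
      exact h4

lemma walk_loopfree (hsf : SquareFree H) {a b : H.V} (γ : Walk H a b) :
    ∀ i < γ.len, γ.toFun i ≠ γ.toFun (i + 1) := by
  intro i hi heq
  have := γ.adj i hi
  rw [heq] at this
  exact hsf.1 _ this

lemma toWord_phi [DecidableEq (H.V × H.V)] (hsf : SquareFree H) {a b : H.V}
    {γ : Walk H a b} (hγ : ReducedW γ) :
    (phi γ).toWord = Lw γ.toFun γ.len := by
  have h1 : phi γ = FreeGroup.mk (Lw γ.toFun γ.len) := (mk_Lw _ _).symm
  rw [h1, FreeGroup.toWord_mk]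
  exact Lw_reduced (walk_loopfree hsf γ) hγ

lemma reduced_eq (hsf : SquareFree H) {a b : H.V} {γ δ : Walk H a b}
    (hγ : ReducedW γ) (hδ : ReducedW δ) (h : phi γ = phi δ) : Eqv2 γ δ := by
  classical
  have hL : Lw γ.toFun γ.len = Lw δ.toFun δ.len := by
    rw [← toWord_phi hsf hγ, ← toWord_phi hsf hδ, h]
  have hlen : γ.len = δ.len := by
    have := congrArg List.length hL
    rw [Lw_length, Lw_length] at this
    omega
  rw [← hlen] at hL
  have hpt : ∀ i ≤ γ.len, γ.toFun i = δ.toFun i := by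
    intro i hi
    rcases Nat.eq_zero_or_pos γ.len with hz | hpos
    · have : i = 0 := by omega
      rw [this, γ.start_eq, δ.start_eq]
    · rcases Nat.lt_or_ge i γ.len with hlt | hge
      · exact (Lw_inj hL i hlt).1
      · have hie : i = γ.len := by omega
        have h4 := (Lw_inj hL (γ.len - 1) (by omega)).2
        rw [show γ.len - 1 + 1 = γ.len from by omega] at h4
        rw [hie]
        exact h4
  apply Relation.EqvGen.rel
  right
  exact ⟨hlen, γ.len + 1, fun i hi _ => hpt i hi⟩

lemma phi_faithful (hsf : SquareFree H) {a b : H.V} {γ δ : Walk H a b}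
    (h : phi γ = phi δ) : Eqv2 γ δ := by
  obtain ⟨γ', hγ'r, hγ'e⟩ := exists_reduced γ
  obtain ⟨δ', hδ'r, hδ'e⟩ := exists_reduced δ
  have h1 : phi γ' = phi δ' := by
    rw [← phi_eqv2 hsf hγ'e, ← phi_eqv2 hsf hδ'e, h]
  exact Relation.EqvGen.trans _ _ _ hγ'e
    (Relation.EqvGen.trans _ _ _ (reduced_eq hsf hγ'r hδ'r h1)
      (Relation.EqvGen.symm _ _ hδ'e))

end
end PhiAux


namespace LevelAux
open PhiAux

noncomputable section
variable {H : SGraph}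

def tseq (av bv : ℕ → H.V) (u : H.V) (m j : ℕ) : ℕ → H.V := fun i =>
  if i = 0 then av 0
  else if i ≤ j ∧ i ≤ m then bv i
  else if i ≤ m then av i
  else if i = m + 1 then u
  else bv 0

variable {av bv : ℕ → H.V} {u : H.V} {m j : ℕ}

lemma tseq_zero : tseq av bv u m j 0 = av 0 := rfl

lemma tseq_bv {i : ℕ} (h1 : 1 ≤ i) (h2 : i ≤ j) (h3 : i ≤ m) :
    tseq av bv u m j i = bv i := by
  unfold tseq
  rw [if_neg (by omega), if_pos ⟨h2, h3⟩]

lemma tseq_av {i : ℕ} (h1 : 1 ≤ i) (h2 : j < i) (h3 : i ≤ m) :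
    tseq av bv u m j i = av i := by
  unfold tseq
  rw [if_neg (by omega), if_neg (by omega), if_pos h3]

lemma tseq_u (hj : j ≤ m) : tseq av bv u m j (m + 1) = u := by
  unfold tseq
  rw [if_neg (by omega), if_neg (by omega), if_neg (by omega), if_pos rfl]

lemma tseq_end (hj : j ≤ m) : tseq av bv u m j (m + 2) = bv 0 := by
  unfold tseq
  rw [if_neg (by omega), if_neg (by omega), if_neg (by omega), if_neg (by omega)]

lemma wprod_pos_shift {g : ℕ → H.V} {m : ℕ} (hm : 0 < m) :
    wprod H g m = sgen H (g 0) (g 1) * wprod H (fun i => g (i + 1)) (m - 1) := by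
  cases m with
  | zero => omega
  | succ m' =>
    rw [wprod_shift_one]
    congr 1

lemma tseq_adj (ha : ∀ i < m, H.E (av i) (av (i + 1)))
    (hb : ∀ i < m, H.E (bv i) (bv (i + 1)))
    (hab : ∀ i < m, H.E (av i) (bv (i + 1)))
    (hba : ∀ i < m, H.E (bv i) (av (i + 1)))
    (hclosea : av m = av 0) (hcloseb : bv m = bv 0)
    (hu1 : H.E (av 0) u) (hu2 : H.E u (bv 0))
    (hm : 1 ≤ m) (hj : j ≤ m) :
    ∀ i < m + 2, H.E (tseq av bv u m j i) (tseq av bv u m j (i + 1)) := by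
  intro i hi
  rcases Nat.eq_zero_or_pos i with rfl | hpos
  · rw [tseq_zero]
    by_cases h1 : 1 ≤ j
    · rw [tseq_bv le_rfl h1 hm]
      exact hab 0 (by omega)
    · rw [tseq_av le_rfl (by omega) hm]
      exact ha 0 (by omega)
  · rcases Nat.lt_or_ge i m with him | him
    · -- 1 ≤ i, i+1 ≤ m
      rcases Nat.lt_or_ge j i with hji | hji
      · rw [tseq_av hpos hji (by omega), tseq_av (by omega) (by omega) (by omega)]
        exact ha i him
      · rcases Nat.lt_or_ge j (i + 1) with hji2 | hji2
        · rw [tseq_bv hpos hji (by omega), tseq_av (by omega) (by omega) (by omega)]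
          exact hba i him
        · rw [tseq_bv hpos hji (by omega), tseq_bv (by omega) (by omega) (by omega)]
          exact hb i him
    · rcases Nat.lt_or_ge i (m + 1) with him1 | him1
      · -- i = m
        have hieq : i = m := by omega
        subst hieq
        rw [tseq_u hj]
        rcases Nat.lt_or_ge j i with hji | hji
        · rw [tseq_av hpos hji le_rfl, hclosea]
          exact hu1
        · rw [tseq_bv hpos (by omega) le_rfl, hcloseb]
          exact H.symm hu2
      · -- i = m+1
        have hieq : i = m + 1 := by omega
        subst hieq
        rw [tseq_u hj, show m + 1 + 1 = m + 2 from rfl, tseq_end hj]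
        exact hu2

lemma tseq_step (hsf : SquareFree H)
    (ha : ∀ i < m, H.E (av i) (av (i + 1)))
    (hb : ∀ i < m, H.E (bv i) (bv (i + 1)))
    (hab : ∀ i < m, H.E (av i) (bv (i + 1)))
    (hba : ∀ i < m, H.E (bv i) (av (i + 1)))
    (hclosea : av m = av 0) (hcloseb : bv m = bv 0)
    (hu1 : H.E (av 0) u) (hu2 : H.E u (bv 0))
    (hm : 1 ≤ m) (hj : j < m) :
    wprod H (tseq av bv u m j) (m + 2) = wprod H (tseq av bv u m (j + 1)) (m + 2) := by
  apply wprod_swap hsf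
    (tseq_adj ha hb hab hba hclosea hcloseb hu1 hu2 hm (by omega))
    (tseq_adj ha hb hab hba hclosea hcloseb hu1 hu2 hm (by omega))
    (j := j + 1) (by omega) (by omega)
  intro i _ hij
  unfold tseq
  by_cases h0 : i = 0
  · rw [if_pos h0, if_pos h0]
  · rw [if_neg h0, if_neg h0]
    by_cases hc : i ≤ j ∧ i ≤ m
    · rw [if_pos hc, if_pos ⟨by omega, hc.2⟩]
    · by_cases hc2 : i ≤ j + 1 ∧ i ≤ m
      · exact absurd (⟨by omega, hc2.2⟩ : i ≤ j ∧ i ≤ m) hc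
      · rw [if_neg hc, if_neg hc2]

lemma level (hsf : SquareFree H)
    (ha : ∀ i < m, H.E (av i) (av (i + 1)))
    (hb : ∀ i < m, H.E (bv i) (bv (i + 1)))
    (hab : ∀ i < m, H.E (av i) (bv (i + 1)))
    (hba : ∀ i < m, H.E (bv i) (av (i + 1)))
    (hclosea : av m = av 0) (hcloseb : bv m = bv 0)
    (hu1 : H.E (av 0) u) (hu2 : H.E u (bv 0)) :
    wprod H av m * (sgen H (av 0) u * sgen H u (bv 0))
      = (sgen H (av 0) u * sgen H u (bv 0)) * wprod H bv m := by
  rcases Nat.eq_zero_or_pos m with rfl | hm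
  · rw [wprod_zero, wprod_zero, one_mul, mul_one]
  -- chain from t 0 to t m
  have hchain : ∀ j ≤ m, wprod H (tseq av bv u m 0) (m + 2)
      = wprod H (tseq av bv u m j) (m + 2) := by
    intro j hj
    induction j with
    | zero => rfl
    | succ j ih =>
      rw [ih (by omega)]
      exact tseq_step hsf ha hb hab hba hclosea hcloseb hu1 hu2 hm (by omega)
  have hend0 : wprod H (tseq av bv u m 0) (m + 2)
      = wprod H av m * (sgen H (av 0) u * sgen H u (bv 0)) := by
    rw [show m + 2 = (m + 1) + 1 from rfl, wprod_succ, wprod_succ,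
      show m + 1 + 1 = m + 2 from rfl, tseq_u (by omega), tseq_end (by omega),
      tseq_av hm (by omega) le_rfl, hclosea, mul_assoc]
    congr 1
    apply wprod_congr
    intro i hi
    rcases Nat.eq_zero_or_pos i with rfl | hpos
    · exact tseq_zero
    · exact tseq_av hpos (by omega) hi
  have hendm : wprod H (tseq av bv u m m) (m + 2)
      = sgen H (av 0) (bv 1) * wprod H (fun i => bv (i + 1)) (m - 1) := by
    rw [show m + 2 = (m + 1) + 1 from rfl, wprod_succ, wprod_succ,
      show m + 1 + 1 = m + 2 from rfl, tseq_u le_rfl, tseq_end le_rfl,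
      tseq_bv hm le_rfl le_rfl, hcloseb, mul_assoc, sgen_mul_sgen, mul_one]
    rw [wprod_pos_shift hm]
    congr 1
    · rw [show tseq av bv u m m 0 = av 0 from tseq_zero, tseq_bv (by omega) (by omega) (by omega)]
    · apply wprod_congr
      intro i hi
      exact tseq_bv (by omega) (by omega) (by omega)
  have hbv : wprod H bv m = sgen H (bv 0) (bv 1) * wprod H (fun i => bv (i + 1)) (m - 1) :=
    wprod_pos_shift hm
  have key : sgen H (av 0) (bv 1)
      = (sgen H (av 0) u * sgen H u (bv 0)) * sgen H (bv 0) (bv 1) := by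
    by_cases h00 : av 0 = bv 0
    · rw [h00, sgen_mul_sgen, one_mul]
    · have hu : u = bv 1 := by
        by_contra hne
        apply hsf.2
        have e3 : H.E (bv 0) (bv 1) := by
          have := hb 0 hm; rwa [show (0:ℕ) + 1 = 1 from rfl] at this
        have e4 : H.E (av 0) (bv 1) := by
          have := hab 0 hm; rwa [show (0:ℕ) + 1 = 1 from rfl] at this
        refine ⟨av 0, u, bv 0, bv 1, ?_, h00, ?_, ?_, hne, ?_, hu1, hu2, e3, H.symm e4⟩
        · intro hh; exact hsf.1 u (hh ▸ hu1)
        · intro hh; exact hsf.1 (bv 1) (hh ▸ e4)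
        · intro hh; exact hsf.1 (bv 0) (hh ▸ hu2)
        · intro hh; exact hsf.1 (bv 1) (hh ▸ e3)
      rw [hu, mul_assoc, sgen_mul_sgen, mul_one]
  calc wprod H av m * (sgen H (av 0) u * sgen H u (bv 0))
      = wprod H (tseq av bv u m 0) (m + 2) := hend0.symm
    _ = wprod H (tseq av bv u m m) (m + 2) := hchain m le_rfl
    _ = sgen H (av 0) (bv 1) * wprod H (fun i => bv (i + 1)) (m - 1) := hendm
    _ = ((sgen H (av 0) u * sgen H u (bv 0)) * sgen H (bv 0) (bv 1))
        * wprod H (fun i => bv (i + 1)) (m - 1) := by rw [← key]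
    _ = (sgen H (av 0) u * sgen H u (bv 0)) * wprod H bv m := by
        rw [hbv, mul_assoc]

end
end LevelAux


namespace MainAux
open PhiAux

noncomputable section
variable {H : SGraph}

def pprod (c : ℕ → FreeGroup (H.V × H.V)) : ℕ → FreeGroup (H.V × H.V)
  | 0 => 1
  | k + 1 => pprod c k * c k

lemma pprod_congr {c c' : ℕ → FreeGroup (H.V × H.V)} {k : ℕ}
    (h : ∀ t < k, c t = c' t) : pprod c k = pprod c' k := by
  induction k with
  | zero => rfl
  | succ k ih =>
    show pprod c k * c k = pprod c' k * c' k
    rw [ih (fun t ht => h t (by omega)), h k (by omega)]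

lemma conj_chain {A c : ℕ → FreeGroup (H.V × H.V)} {n : ℕ}
    (h : ∀ t < n, A t * c t = c t * A (t + 1)) :
    ∀ k ≤ n, A 0 * pprod c k = pprod c k * A k := by
  intro k hk
  induction k with
  | zero =>
    show A 0 * 1 = 1 * A 0
    rw [mul_one, one_mul]
  | succ k ih =>
    show A 0 * (pprod c k * c k) = pprod c k * c k * A (k + 1)
    rw [← mul_assoc, ih (by omega), mul_assoc, h k (by omega), mul_assoc]

lemma wprod_double (g : ℕ → H.V) (n : ℕ) :
    wprod H g (2 * n)
      = pprod (fun t => sgen H (g (2 * t)) (g (2 * t + 1))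
          * sgen H (g (2 * t + 1)) (g (2 * t + 2))) n := by
  induction n with
  | zero => rfl
  | succ n ih =>
    rw [show 2 * (n + 1) = (2 * n + 1) + 1 from by omega, wprod_succ, wprod_succ]
    show _ = pprod _ n * _
    rw [ih, mul_assoc, show 2 * n + 1 + 1 = 2 * n + 2 from rfl]

end
end MainAux


theorem statement_11 (G H : SGraph) [Finite G.V] [Finite H.V]
    (hGconn : SGraph.Connected G) (hHconn : SGraph.Connected H)
    (hGe : ∃ x y : G.V, G.E x y) (hHe : ∃ x y : H.V, H.E x y)
    (hHsf : SquareFree H)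
    (f : G.V → H.V) (hf : IsGraphHom G H f)
    (v : G.V) (hv : ∃ v' : G.V, G.E v v')
    (hK : ∃ γ₁ γ₂ : Walk G v v,
      ¬ Eqv2 ((Walk.map f hf γ₁).concat (Walk.map f hf γ₂))
        ((Walk.map f hf γ₂).concat (Walk.map f hf γ₁))) :
    ∀ ω : Walk H (f v) (f v), Realizable f v ω → Eqv2 ω (constWalk (f v)) := by
    classical
  intro ω hreal
  obtain ⟨n, h, hh, hs, he, v', hvv', heqv⟩ := hreal
  obtain ⟨γ₁, γ₂, hK2⟩ := hK
  set c : ℕ → FreeGroup (H.V × H.V) := fun t =>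
    PhiAux.sgen H (h (v, finClip n t)) (h (v', finClip n t)) *
      PhiAux.sgen H (h (v', finClip n t)) (h (v, finClip n (t + 1))) with hc
  have hv0 : ∀ t, (realizedWalk h hh hvv' (hs v) (he v)).toFun (2 * t)
      = h (v, finClip n t) := by
    intro t
    show (if (2 * t) % 2 = 0 then h (v, finClip n ((2 * t) / 2))
      else h (v', finClip n ((2 * t) / 2))) = _
    rw [if_pos (by omega)]
    have ht : 2 * t / 2 = t := by omega
    rw [ht]
  have hv1 : ∀ t, (realizedWalk h hh hvv' (hs v) (he v)).toFun (2 * t + 1)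
      = h (v', finClip n t) := by
    intro t
    show (if (2 * t + 1) % 2 = 0 then h (v, finClip n ((2 * t + 1) / 2))
      else h (v', finClip n ((2 * t + 1) / 2))) = _
    rw [if_neg (by omega)]
    have ht : (2 * t + 1) / 2 = t := by omega
    rw [ht]
  have hv2 : ∀ t, (realizedWalk h hh hvv' (hs v) (he v)).toFun (2 * t + 2)
      = h (v, finClip n (t + 1)) := by
    intro t
    show (if (2 * t + 2) % 2 = 0 then h (v, finClip n ((2 * t + 2) / 2))
      else h (v', finClip n ((2 * t + 2) / 2))) = _
    rw [if_pos (by omega)]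
    have ht : (2 * t + 2) / 2 = t + 1 := by omega
    rw [ht]
  have hω : PhiAux.phi ω = MainAux.pprod c n := by
    rw [PhiAux.phi_eqv2 hHsf heqv]
    show PhiAux.wprod H (realizedWalk h hh hvv' (hs v) (he v)).toFun (2 * n) = _
    rw [MainAux.wprod_double]
    apply MainAux.pprod_congr
    intro t ht
    rw [hv0, hv1, hv2]
  have hcomm : ∀ γ : Walk G v v, Commute (PhiAux.phi (Walk.map f hf γ))
      (MainAux.pprod c n) := by
    intro γ
    set A : ℕ → FreeGroup (H.V × H.V) := fun t =>
      PhiAux.wprod H (fun i => h (γ.toFun i, finClip n t)) γ.len with hA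
    have hstep : ∀ t < n, A t * c t = c t * A (t + 1) := by
      intro t ht
      have e0 : G.E (γ.toFun 0) v' := by rw [γ.start_eq]; exact hvv'
      have hlev : A t * (PhiAux.sgen H (h (γ.toFun 0, finClip n t)) (h (v', finClip n t)) *
          PhiAux.sgen H (h (v', finClip n t)) (h (γ.toFun 0, finClip n (t + 1)))) =
          (PhiAux.sgen H (h (γ.toFun 0, finClip n t)) (h (v', finClip n t)) *
          PhiAux.sgen H (h (v', finClip n t)) (h (γ.toFun 0, finClip n (t + 1)))) * A (t + 1) :=
        LevelAux.level (H := H) hHsf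
          (av := fun i => h (γ.toFun i, finClip n t))
          (bv := fun i => h (γ.toFun i, finClip n (t + 1)))
          (u := h (v', finClip n t)) (m := γ.len)
          (fun i hi => hh ⟨γ.adj i hi, by dsimp only [finClip]; omega, by dsimp only [finClip]; omega⟩)
          (fun i hi => hh ⟨γ.adj i hi, by dsimp only [finClip]; omega, by dsimp only [finClip]; omega⟩)
          (fun i hi => hh ⟨γ.adj i hi, by dsimp only [finClip]; omega, by dsimp only [finClip]; omega⟩)
          (fun i hi => hh ⟨γ.adj i hi, by dsimp only [finClip]; omega, by dsimp only [finClip]; omega⟩)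
          (by show h (γ.toFun γ.len, finClip n t) = h (γ.toFun 0, finClip n t)
              rw [γ.end_eq, γ.start_eq])
          (by show h (γ.toFun γ.len, finClip n (t + 1)) = h (γ.toFun 0, finClip n (t + 1))
              rw [γ.end_eq, γ.start_eq])
          (hh ⟨e0, by dsimp only [finClip]; omega, by dsimp only [finClip]; omega⟩)
          (hh ⟨G.symm e0, by dsimp only [finClip]; omega, by dsimp only [finClip]; omega⟩)
      rw [γ.start_eq] at hlev
      exact hlev
    have h0 : A 0 = PhiAux.phi (Walk.map f hf γ) := by
      apply PhiAux.wprod_congr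
      intro i _
      exact hs (γ.toFun i)
    have hn' : A n = PhiAux.phi (Walk.map f hf γ) := by
      apply PhiAux.wprod_congr
      intro i _
      exact he (γ.toFun i)
    have hcc := MainAux.conj_chain hstep n le_rfl
    rw [h0, hn'] at hcc
    exact hcc
  have hAB : ¬ Commute (PhiAux.phi (Walk.map f hf γ₁)) (PhiAux.phi (Walk.map f hf γ₂)) := by
    intro hcomm2
    apply hK2
    apply PhiAux.phi_faithful hHsf
    rw [PhiAux.phi_concat, PhiAux.phi_concat]
    exact hcomm2
  have hg1 : MainAux.pprod c n = 1 := by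
    by_contra hne
    exact hAB (CTAux.commute_transitive hne (hcomm γ₁) (hcomm γ₂))
  apply PhiAux.phi_faithful hHsf
  rw [hω, hg1, PhiAux.phi_const]
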